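/- arXiv:2108.13204 — 2 statements merged into one kernel-verified Lean document; each statement's English description precedes it below -/
import Mathlib

section
/- T_{3,3} + 6S̃_{1,5} + 3S̃_{2,4} + S̃_{3,3} = 49ζ(3)² − π⁶/30, where T_{p,q} = ∑_{n≥1} h_{n-1}^{(p)}/(n−1/2)^q and S̃_{p,q} = ∑_{n≥1} h_n^{(p)}/n^q, with h_n^{(r)} = ∑_{k=1}^n 1/(k−1/2)^r. -/
open Finset Filter Topology


/-- odd harmonic numbers of order r: h_n^{(r)} = ∑_{k=1}^n 1/(k-1/2)^r -/
noncomputable def oddH (r n : ℕ) : ℝ := ∑ k ∈ Finset.range n, (((k : ℝ) + 1/2) ^ r)⁻¹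

/-- generalized harmonic numbers of order r: H_n^{(r)} = ∑_{k=1}^n 1/k^r -/
noncomputable def genH (r n : ℕ) : ℝ := ∑ k ∈ Finset.range n, (((k : ℝ) + 1) ^ r)⁻¹

/-- T_{p,q} = ∑_{n≥1} h_{n-1}^{(p)}/(n-1/2)^q -/
noncomputable def Tsum (p q : ℕ) : ℝ := ∑' n : ℕ, oddH p n / ((n : ℝ) + 1/2) ^ q

/-- S̃_{p,q} = ∑_{n≥1} h_n^{(p)}/n^q -/
noncomputable def Ssum (p q : ℕ) : ℝ := ∑' n : ℕ, oddH p (n + 1) / ((n : ℝ) + 1) ^ q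

/-- R_{p,q} = ∑_{n≥1} H_{n-1}^{(p)}/(n-1/2)^q -/
noncomputable def Rsum (p q : ℕ) : ℝ := ∑' n : ℕ, genH p n / ((n : ℝ) + 1/2) ^ q

/-- t̃(s) = ∑_{n≥1} 1/(n-1/2)^s -/
noncomputable def ttv (s : ℕ) : ℝ := ∑' n : ℕ, (((n : ℝ) + 1/2) ^ s)⁻¹

/-- ζ(s) = ∑_{n≥1} 1/n^s (for integer s ≥ 2) -/
noncomputable def zv (s : ℕ) : ℝ := ∑' n : ℕ, (((n : ℝ) + 1) ^ s)⁻¹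

lemma summable_aux {j : ℕ} (hj : 2 ≤ j) : Summable (fun k : ℕ => (((k:ℝ)+1/2)^j)⁻¹) := by
  have h0 : Summable (fun k : ℕ => ((k:ℝ)^j)⁻¹) := Real.summable_nat_pow_inv.2 hj
  have h1 : Summable (fun k : ℕ => (2:ℝ)^j * (((k:ℝ)+1)^j)⁻¹) := by
    apply Summable.mul_left
    have := (summable_nat_add_iff 1).2 h0
    exact this.congr fun k => by push_cast; ring_nf
  refine Summable.of_nonneg_of_le (fun k => by positivity) (fun k => ?_) h1
  rw [show (2:ℝ)^j * (((k:ℝ)+1)^j)⁻¹ = (((((k:ℝ)+1)/2))^j)⁻¹ by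
    rw [div_pow, inv_div]; ring]
  gcongr
  linarith

lemma oddH_nonneg (p n : ℕ) : 0 ≤ oddH p n :=
  Finset.sum_nonneg fun k _ => by positivity

lemma oddH_le (p n : ℕ) : oddH p n ≤ 2^p * n := by
  calc oddH p n ≤ ∑ _k ∈ Finset.range n, (2:ℝ)^p := by
        apply Finset.sum_le_sum
        intro k _
        rw [show ((2:ℝ)^p) = (((1:ℝ)/2)^p)⁻¹ by simp]
        gcongr
        linarith
    _ = 2^p * n := by simp [mul_comm]

lemma summable_S (p q : ℕ) (hq : 3 ≤ q) :
    Summable (fun n : ℕ => oddH p (n+1) / ((n:ℝ)+1)^q) := by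
  have h1 : Summable (fun n : ℕ => (2:ℝ)^p * (((n:ℝ)+1)^2)⁻¹) := by
    apply Summable.mul_left
    have h0 : Summable (fun k : ℕ => ((k:ℝ)^2)⁻¹) := Real.summable_nat_pow_inv.2 one_lt_two
    exact ((summable_nat_add_iff 1).2 h0).congr fun k => by push_cast; ring_nf
  refine Summable.of_nonneg_of_le (fun n => div_nonneg (oddH_nonneg _ _) (by positivity)) (fun n => ?_) h1
  have hb : oddH p (n+1) ≤ 2^p * ((n:ℝ)+1) := by
    have := oddH_le p (n+1); push_cast at this ⊢; linarith
  have hd : ((n:ℝ)+1)^2 * ((n:ℝ)+1) ≤ ((n:ℝ)+1)^q := by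
    calc ((n:ℝ)+1)^2 * ((n:ℝ)+1) = ((n:ℝ)+1)^3 := by ring
      _ ≤ ((n:ℝ)+1)^q := by
          apply pow_le_pow_right₀ (by linarith) hq
  calc oddH p (n+1) / ((n:ℝ)+1)^q ≤ (2^p * ((n:ℝ)+1)) / (((n:ℝ)+1)^2 * ((n:ℝ)+1)) := by
        apply div_le_div₀ (by positivity) hb (by positivity) hd
    _ = 2^p * (((n:ℝ)+1)^2)⁻¹ := by field_simp

lemma summable_T : Summable (fun n : ℕ => oddH 3 n / ((n:ℝ)+1/2)^3) := by
  have h1 : Summable (fun n : ℕ => (8:ℝ) * (((n:ℝ)+1/2)^2)⁻¹) :=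
    (summable_aux le_rfl).mul_left 8
  refine Summable.of_nonneg_of_le (fun n => div_nonneg (oddH_nonneg _ _) (by positivity)) (fun n => ?_) h1
  have hb : oddH 3 n ≤ 8 * ((n:ℝ)+1/2) := by
    have := oddH_le 3 n; norm_num at this; linarith
  calc oddH 3 n / ((n:ℝ)+1/2)^3 ≤ (8 * ((n:ℝ)+1/2)) / (((n:ℝ)+1/2)^2 * ((n:ℝ)+1/2)) := by
        apply div_le_div₀ (by positivity) hb (by positivity) (le_of_eq (by ring))
    _ = 8 * (((n:ℝ)+1/2)^2)⁻¹ := by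
        have : ((n:ℝ)+1/2) ≠ 0 := by positivity
        field_simp

lemma T33 : 2 * (∑' n : ℕ, oddH 3 n / ((n:ℝ)+1/2)^3) + ttv 6 = ttv 3 ^ 2 := by
  set f : ℕ → ℝ := fun k => (((k:ℝ)+1/2)^3)⁻¹ with hfdef
  have hf : Summable f := summable_aux (by norm_num)
  have hf6 : Summable (fun k : ℕ => (((k:ℝ)+1/2)^6)⁻¹) := summable_aux (by norm_num)
  have h6 : Summable (fun k : ℕ => f k * f k) := by
    refine hf6.congr fun k => ?_
    simp only [hfdef, ← mul_inv, ← pow_add]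
  have hT : Summable (fun n : ℕ => oddH 3 n / ((n:ℝ)+1/2)^3) := summable_T
  have hsum : HasSum (fun n : ℕ => 2 * (oddH 3 n / ((n:ℝ)+1/2)^3) + f n * f n)
      (2 * (∑' n : ℕ, oddH 3 n / ((n:ℝ)+1/2)^3) + ttv 6) := by
    refine ((hT.hasSum.mul_left 2).add ?_)
    have := hf6.hasSum
    rw [show ttv 6 = ∑' k : ℕ, (((k:ℝ)+1/2)^6)⁻¹ from rfl]
    exact this.congr_fun fun k => by simp only [hfdef, ← mul_inv, ← pow_add]
  have hps : ∀ N : ℕ, ∑ n ∈ Finset.range N,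
      (2 * (oddH 3 n / ((n:ℝ)+1/2)^3) + f n * f n) = oddH 3 N ^ 2 := by
    intro N
    induction N with
    | zero => simp [oddH]
    | succ N ih =>
      rw [Finset.sum_range_succ, ih,
        show oddH 3 (N+1) = oddH 3 N + f N from Finset.sum_range_succ _ _]
      simp only [hfdef, div_eq_mul_inv]
      ring
  have htend := hsum.tendsto_sum_nat
  simp only [hps] at htend
  have hlim : Tendsto (fun N : ℕ => oddH 3 N ^ 2) atTop (𝓝 (ttv 3 ^ 2)) := by
    have h1 : Tendsto (fun N : ℕ => oddH 3 N) atTop (𝓝 (ttv 3)) := by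
      have := hf.hasSum.tendsto_sum_nat
      rw [show (∑' k : ℕ, f k) = ttv 3 from rfl] at this
      exact this
    exact h1.pow 2
  exact tendsto_nhds_unique htend hlim

lemma algid (x s : ℝ) (hx : x ≠ 0) (hsx : s - x ≠ 0) (hs : s ≠ 0) :
    (x^3)⁻¹ * ((s-x)^3)⁻¹ =
      6/s^5 * ((x^1)⁻¹) + 6/s^5 * (((s-x)^1)⁻¹) + 3/s^4 * ((x^2)⁻¹) + 3/s^4 * (((s-x)^2)⁻¹)
      + 1/s^3 * ((x^3)⁻¹) + 1/s^3 * (((s-x)^3)⁻¹) := by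
  field_simp
  ring

lemma innerSum8 (n : ℕ) : ∑ k ∈ Finset.range (n+1),
    ((((k:ℝ)+1/2)^3)⁻¹ * ((((n-k:ℕ):ℝ)+1/2)^3)⁻¹) =
    12 * (oddH 1 (n+1) / ((n:ℝ)+1)^5) + 6 * (oddH 2 (n+1) / ((n:ℝ)+1)^4)
      + 2 * (oddH 3 (n+1) / ((n:ℝ)+1)^3) := by
  have hrefl : ∀ j : ℕ, ∑ k ∈ Finset.range (n+1), ((((n-k:ℕ):ℝ)+1/2)^j)⁻¹ = oddH j (n+1) := by
    intro j
    rw [oddH, ← Finset.sum_range_reflect]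
    apply Finset.sum_congr rfl
    intro k hk
    simp only [Nat.add_sub_cancel]
    rw [Nat.sub_sub_self (Nat.lt_succ_iff.mp (Finset.mem_range.mp hk))]
  have key : ∀ k ∈ Finset.range (n+1),
      ((((k:ℝ)+1/2)^3)⁻¹ * ((((n-k:ℕ):ℝ)+1/2)^3)⁻¹) =
      6/((n:ℝ)+1)^5 * ((((k:ℝ)+1/2)^1)⁻¹) + 6/((n:ℝ)+1)^5 * (((((n-k:ℕ):ℝ)+1/2)^1)⁻¹)
      + 3/((n:ℝ)+1)^4 * ((((k:ℝ)+1/2)^2)⁻¹) + 3/((n:ℝ)+1)^4 * (((((n-k:ℕ):ℝ)+1/2)^2)⁻¹)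
      + 1/((n:ℝ)+1)^3 * ((((k:ℝ)+1/2)^3)⁻¹) + 1/((n:ℝ)+1)^3 * (((((n-k:ℕ):ℝ)+1/2)^3)⁻¹) := by
    intro k hk
    have hk' : k ≤ n := Nat.lt_succ_iff.mp (Finset.mem_range.mp hk)
    have hcast : (((n-k:ℕ)):ℝ) + 1/2 = ((n:ℝ)+1) - ((k:ℝ)+1/2) := by
      rw [Nat.cast_sub hk']; ring
    rw [hcast]
    apply algid
    · positivity
    · have : (k:ℝ) ≤ (n:ℝ) := Nat.cast_le.mpr hk'
      intro h; nlinarith [h]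
    · positivity
  rw [Finset.sum_congr rfl key]
  simp only [Finset.sum_add_distrib, ← Finset.mul_sum]
  rw [hrefl 1, hrefl 2, hrefl 3,
    show ∑ k ∈ Finset.range (n+1), ((((k:ℝ)+1/2)^1)⁻¹) = oddH 1 (n+1) from rfl,
    show ∑ k ∈ Finset.range (n+1), ((((k:ℝ)+1/2)^2)⁻¹) = oddH 2 (n+1) from rfl,
    show ∑ k ∈ Finset.range (n+1), ((((k:ℝ)+1/2)^3)⁻¹) = oddH 3 (n+1) from rfl]
  ring

lemma cauchy8 : ttv 3 ^ 2 =
    12 * (∑' n : ℕ, oddH 1 (n+1) / ((n:ℝ)+1)^5)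
    + 6 * (∑' n : ℕ, oddH 2 (n+1) / ((n:ℝ)+1)^4)
    + 2 * (∑' n : ℕ, oddH 3 (n+1) / ((n:ℝ)+1)^3) := by
  have hf : Summable (fun k : ℕ => (((k:ℝ)+1/2)^3)⁻¹) := summable_aux (by norm_num)
  have hfn : Summable (fun k : ℕ => ‖(((k:ℝ)+1/2)^3)⁻¹‖) := by
    refine hf.congr fun k => ?_
    rw [Real.norm_of_nonneg (by positivity)]
  have hcp := tsum_mul_tsum_eq_tsum_sum_range_of_summable_norm hfn hfn
  have h1 : ttv 3 ^ 2 = ∑' n : ℕ, ∑ k ∈ Finset.range (n+1),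
      ((((k:ℝ)+1/2)^3)⁻¹ * ((((n-k:ℕ):ℝ)+1/2)^3)⁻¹) := by
    rw [ttv, sq, hcp]
  rw [h1, tsum_congr innerSum8]
  have s1 := (summable_S 1 5 (by norm_num)).mul_left 12
  have s2 := (summable_S 2 4 (by norm_num)).mul_left 6
  have s3 := (summable_S 3 3 (by norm_num)).mul_left 2
  rw [Summable.tsum_add (s1.add s2) s3, Summable.tsum_add s1 s2, tsum_mul_left, tsum_mul_left, tsum_mul_left]

lemma ttv_eq {s : ℕ} (hs : 2 ≤ s) : ttv s = (2^s - 1) * zv s := by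
  set G : ℕ → ℝ := fun n => (((n:ℝ))^s)⁻¹ with hGdef
  have hG : Summable G := Real.summable_nat_pow_inv.2 hs
  have hzvG : ∑' n, G n = zv s := by
    rw [Summable.tsum_eq_zero_add hG]
    have hG0 : G 0 = 0 := by
      simp [hGdef, zero_pow (by omega : s ≠ 0)]
    rw [hG0, zero_add, zv]
    exact tsum_congr fun n => by simp only [hGdef]; push_cast; ring_nf
  have he : HasSum (fun k : ℕ => G (2*k)) (((2:ℝ)^s)⁻¹ * zv s) := by
    have := (hG.hasSum.mul_left ((2:ℝ)^s)⁻¹)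
    rw [hzvG] at this
    refine this.congr_fun fun k => ?_
    simp only [hGdef]
    push_cast
    rw [mul_pow, mul_inv]
  have ho : HasSum (fun k : ℕ => G (2*k+1)) (((2:ℝ)^s)⁻¹ * ttv s) := by
    have := ((summable_aux hs).hasSum.mul_left ((2:ℝ)^s)⁻¹)
    rw [show (∑' k : ℕ, (((k:ℝ)+1/2)^s)⁻¹) = ttv s from rfl] at this
    refine this.congr_fun fun k => ?_
    simp only [hGdef]
    rw [show ((2*k+1:ℕ):ℝ) = 2*((k:ℝ)+1/2) by push_cast; ring, mul_pow, mul_inv]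
  have htot : HasSum G (((2:ℝ)^s)⁻¹ * zv s + ((2:ℝ)^s)⁻¹ * ttv s) := he.even_add_odd ho
  have := htot.tsum_eq
  rw [hzvG] at this
  have h2 : (0:ℝ) < 2^s := by positivity
  field_simp at this ⊢
  nlinarith [this]

lemma bern5 : bernoulli' 5 = 0 := by
  have h1 : Nat.choose 5 2 = 10 := by decide
  have h2 : Nat.choose 5 3 = 10 := by decide
  rw [bernoulli'_def]
  norm_num [Finset.sum_range_succ, h1, h2]

lemma bern6 : bernoulli' 6 = 1/42 := by
  have h1 : Nat.choose 6 2 = 15 := by decide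
  have h2 : Nat.choose 6 3 = 20 := by decide
  have h3 : Nat.choose 6 4 = 15 := by decide
  rw [bernoulli'_def]
  norm_num [Finset.sum_range_succ, h1, h2, h3, bern5]

lemma zv6 : zv 6 = Real.pi ^ 6 / 945 := by
  have h := hasSum_zeta_nat (k := 3) (by norm_num)
  norm_num at h
  have hb : ((bernoulli 6 : ℚ) : ℝ) = 1/42 := by
    rw [bernoulli_eq_bernoulli'_of_ne_one (by norm_num), bern6]; norm_num
  rw [hb] at h
  have h' : HasSum (fun n : ℕ => (((n:ℝ))^6)⁻¹) (Real.pi ^ 6 / 945) := by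
    convert h using 1
    ring
  have hzvG : ∑' n : ℕ, (((n:ℝ))^6)⁻¹ = zv 6 := by
    rw [Summable.tsum_eq_zero_add h'.summable,
      show ((((0:ℕ):ℝ))^6)⁻¹ = 0 by norm_num, zero_add, zv]
    exact tsum_congr fun n => by push_cast; ring_nf
  rw [← hzvG, h'.tsum_eq]

theorem stmt8 : Tsum 3 3 + 6 * Ssum 1 5 + 3 * Ssum 2 4 + Ssum 3 3 = 49 * zv 3 ^ 2 - Real.pi ^ 6 / 30 := by
  have hA := T33
  have hB := cauchy8
  have hC3 : ttv 3 = 7 * zv 3 := by rw [ttv_eq (by norm_num : 2 ≤ 3)]; norm_num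
  have hC6 : ttv 6 = 63 * zv 6 := by rw [ttv_eq (by norm_num : 2 ≤ 6)]; norm_num
  have hD := zv6
  have hsq : ttv 3 ^ 2 = 49 * zv 3 ^ 2 := by rw [hC3]; ring
  have hT : Tsum 3 3 = ∑' n : ℕ, oddH 3 n / ((n:ℝ)+1/2)^3 := rfl
  have hS1 : Ssum 1 5 = ∑' n : ℕ, oddH 1 (n+1) / ((n:ℝ)+1)^5 := rfl
  have hS2 : Ssum 2 4 = ∑' n : ℕ, oddH 2 (n+1) / ((n:ℝ)+1)^4 := rfl
  have hS3 : Ssum 3 3 = ∑' n : ℕ, oddH 3 (n+1) / ((n:ℝ)+1)^3 := rfl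
  rw [hD] at hC6
  linarith [hA, hB, hsq, hC6]
end

section
/- T_{2,3} + T_{3,2} + S̃_{2,3} + S̃_{3,2} = (7/3)π²ζ(3), where T_{p,q} = ∑_{n≥1} h_{n-1}^{(p)}/(n−1/2)^q and S̃_{p,q} = ∑_{n≥1} h_n^{(p)}/n^q, with h_n^{(r)} = ∑_{k=1}^n 1/(k−1/2)^r. -/
set_option maxHeartbeats 1000000

open Finset

/-! ### Auxiliary ladders -/

noncomputable def ou (s n : ℕ) : ℝ := (((n : ℝ) + 1/2) ^ s)⁻¹
noncomputable def iv (s n : ℕ) : ℝ := (((n : ℝ) + 1) ^ s)⁻¹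

lemma ou_nonneg (s n : ℕ) : 0 ≤ ou s n := by unfold ou; positivity
lemma iv_nonneg (s n : ℕ) : 0 ≤ iv s n := by unfold iv; positivity

lemma summable_iv {s : ℕ} (hs : 2 ≤ s) : Summable (iv s) := by
  have h : Summable (fun n : ℕ ↦ ((n : ℝ) ^ s)⁻¹) :=
    Real.summable_nat_pow_inv.mpr (by omega)
  have h2 := (summable_nat_add_iff 1).mpr h
  refine h2.congr fun n ↦ ?_
  unfold iv
  push_cast
  ring_nf

lemma summable_ou {s : ℕ} (hs : 2 ≤ s) : Summable (ou s) := by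
  refine Summable.of_nonneg_of_le (fun n ↦ ou_nonneg s n) (fun n ↦ ?_)
    ((summable_iv hs).mul_left ((2:ℝ)^s))
  unfold ou iv
  have h1 : ((n:ℝ)+1) ≤ 2*((n:ℝ)+1/2) := by linarith
  have h2 : ((n:ℝ)+1)^s ≤ (2*((n:ℝ)+1/2))^s := by
    apply pow_le_pow_left₀ (by positivity) h1
  calc (((n:ℝ)+1/2)^s)⁻¹ = 2^s * ((2*((n:ℝ)+1/2))^s)⁻¹ := by
        rw [mul_pow, mul_inv, ← mul_assoc, mul_inv_cancel₀ (by positivity), one_mul]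
    _ ≤ 2^s * (((n:ℝ)+1)^s)⁻¹ := by gcongr

lemma ou_anti (s : ℕ) {m n : ℕ} (h : m ≤ n) : ou s n ≤ ou s m := by
  unfold ou
  have hc : ((m:ℝ)+1/2) ≤ (n:ℝ)+1/2 := by
    have : (m:ℝ) ≤ (n:ℝ) := by exact_mod_cast h
    linarith
  gcongr

lemma iv_anti (s : ℕ) {m n : ℕ} (h : m ≤ n) : iv s n ≤ iv s m := by
  unfold iv
  have hc : ((m:ℝ)+1) ≤ (n:ℝ)+1 := by
    have : (m:ℝ) ≤ (n:ℝ) := by exact_mod_cast h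
    linarith
  gcongr

lemma iv_one_le (n : ℕ) : iv 1 n ≤ 1 := by
  unfold iv
  rw [pow_one]
  have h1 : (1:ℝ) ≤ (n:ℝ) + 1 := by
    have : (0:ℝ) ≤ (n:ℝ) := Nat.cast_nonneg n
    linarith
  exact inv_le_one_of_one_le₀ h1

lemma ou_one_le (n : ℕ) : ou 1 n ≤ 2 := by
  unfold ou
  rw [pow_one]
  have h1 : (2⁻¹:ℝ) ≤ (n:ℝ) + 1/2 := by
    have h0 : (0:ℝ) ≤ (n:ℝ) := Nat.cast_nonneg n
    norm_num
  have h2 : ((n:ℝ) + 1/2)⁻¹ ≤ (2⁻¹:ℝ)⁻¹ := by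
    gcongr
  simpa using h2

lemma ou4_bound (k n : ℕ) : ou 4 (k + n + 1) ≤ ou 2 k * ou 2 n := by
  unfold ou
  rw [← mul_inv]
  have hx : (0:ℝ) < (k:ℝ)+1/2 := by positivity
  have hy : (0:ℝ) < (n:ℝ)+1/2 := by positivity
  have hKx : ((k:ℝ)+1/2) ≤ ((k+n+1:ℕ):ℝ)+1/2 := by
    push_cast
    have : (0:ℝ) ≤ (n:ℝ) := Nat.cast_nonneg n
    linarith
  have hKy : ((n:ℝ)+1/2) ≤ ((k+n+1:ℕ):ℝ)+1/2 := by
    push_cast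
    have : (0:ℝ) ≤ (k:ℝ) := Nat.cast_nonneg k
    linarith
  have h1 : ((k:ℝ)+1/2)^2 ≤ (((k+n+1:ℕ):ℝ)+1/2)^2 := pow_le_pow_left₀ hx.le hKx 2
  have h2 : ((n:ℝ)+1/2)^2 ≤ (((k+n+1:ℕ):ℝ)+1/2)^2 := pow_le_pow_left₀ hy.le hKy 2
  have h3 : ((k:ℝ)+1/2)^2 * ((n:ℝ)+1/2)^2
      ≤ (((k+n+1:ℕ):ℝ)+1/2)^2 * (((k+n+1:ℕ):ℝ)+1/2)^2 := by
    apply mul_le_mul h1 h2 (by positivity) (by positivity)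
  have h4 : (((k+n+1:ℕ):ℝ)+1/2)^2 * (((k+n+1:ℕ):ℝ)+1/2)^2
      = (((k+n+1:ℕ):ℝ)+1/2)^4 := by ring
  have h5 : ((k:ℝ)+1/2)^2 * ((n:ℝ)+1/2)^2 ≤ (((k+n+1:ℕ):ℝ)+1/2)^4 := by
    rw [← h4]; exact h3
  gcongr

/-! ### Summation over antidiagonals -/

lemma tsum_antidiag {F : ℕ × ℕ → ℝ} (h : Summable F) :
    ∑' p : ℕ × ℕ, F p = ∑' n : ℕ, ∑ p ∈ antidiagonal n, F p := by
  have hs : Summable (fun c : (Σ n : ℕ, {x // x ∈ antidiagonal n}) ↦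
      F (Finset.HasAntidiagonal.sigmaAntidiagonalEquivProd c)) := (Equiv.summable_iff _).mpr h
  rw [← Finset.HasAntidiagonal.sigmaAntidiagonalEquivProd.tsum_eq F, Summable.tsum_sigma hs]
  exact tsum_congr fun n ↦ Finset.tsum_subtype _ _

lemma summable_antidiag {F : ℕ × ℕ → ℝ} (h : Summable F) :
    Summable fun n : ℕ ↦ ∑ p ∈ antidiagonal n, F p := by
  have hs : Summable (fun c : (Σ n : ℕ, {x // x ∈ antidiagonal n}) ↦
      F (Finset.HasAntidiagonal.sigmaAntidiagonalEquivProd c)) := (Equiv.summable_iff _).mpr h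
  exact hs.sigma.congr fun n ↦ Finset.tsum_subtype _ _

lemma tsum_diag {f g : ℕ → ℝ} (h : Summable fun p : ℕ × ℕ ↦ f p.1 * g (p.1 + p.2)) :
    ∑' p : ℕ × ℕ, f p.1 * g (p.1 + p.2) = ∑' n : ℕ, (∑ i ∈ range (n + 1), f i) * g n := by
  rw [tsum_antidiag h]
  refine tsum_congr fun n ↦ ?_
  rw [Finset.Nat.sum_antidiagonal_eq_sum_range_succ_mk, sum_mul]
  refine sum_congr rfl fun i hi ↦ ?_
  rw [mem_range] at hi
  have hin : i + (n - i) = n := by omega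
  rw [hin]

lemma summable_diag {f g : ℕ → ℝ} (h : Summable fun p : ℕ × ℕ ↦ f p.1 * g (p.1 + p.2)) :
    Summable fun n : ℕ ↦ (∑ i ∈ range (n + 1), f i) * g n := by
  refine (summable_antidiag h).congr fun n ↦ ?_
  rw [Finset.Nat.sum_antidiagonal_eq_sum_range_succ_mk, sum_mul]
  refine sum_congr rfl fun i hi ↦ ?_
  rw [mem_range] at hi
  have hin : i + (n - i) = n := by omega
  rw [hin]

lemma tsum_diag_succ {f g : ℕ → ℝ} (h : Summable fun p : ℕ × ℕ ↦ f p.1 * g (p.1 + p.2 + 1)) :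
    ∑' p : ℕ × ℕ, f p.1 * g (p.1 + p.2 + 1) = ∑' n : ℕ, (∑ i ∈ range n, f i) * g n := by
  have h2 := tsum_diag (f := f) (g := fun m ↦ g (m + 1)) h
  have hsum : Summable fun n : ℕ ↦ (∑ i ∈ range (n + 1), f i) * g (n + 1) :=
    summable_diag (f := f) (g := fun m ↦ g (m + 1)) h
  have h3 : (∑' n : ℕ, (∑ i ∈ range n, f i) * g n)
      = (∑ i ∈ range 0, f i) * g 0 + ∑' n : ℕ, (∑ i ∈ range (n + 1), f i) * g (n + 1) :=
    tsum_eq_zero_add' hsum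
  rw [h2, h3]
  simp

lemma tsum_swap {F : ℕ × ℕ → ℝ} :
    ∑' p : ℕ × ℕ, F p = ∑' p : ℕ × ℕ, F (p.2, p.1) :=
  ((Equiv.prodComm ℕ ℕ).tsum_eq F).symm

lemma summable_swap {F : ℕ × ℕ → ℝ} (h : Summable F) :
    Summable fun p : ℕ × ℕ ↦ F (p.2, p.1) :=
  ((Equiv.prodComm ℕ ℕ).summable_iff (f := F)).mpr h

lemma tsum_diag_succ_snd {f g : ℕ → ℝ}
    (h : Summable fun p : ℕ × ℕ ↦ f p.2 * g (p.1 + p.2 + 1)) :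
    ∑' p : ℕ × ℕ, f p.2 * g (p.1 + p.2 + 1) = ∑' n : ℕ, (∑ i ∈ range n, f i) * g n := by
  have hsw : Summable fun p : ℕ × ℕ ↦ f p.1 * g (p.1 + p.2 + 1) := by
    have h1 := summable_swap (F := fun p : ℕ × ℕ ↦ f p.2 * g (p.1 + p.2 + 1)) h
    refine h1.congr fun p ↦ ?_
    simp only
    rw [Nat.add_comm p.2 p.1]
  calc ∑' p : ℕ × ℕ, f p.2 * g (p.1 + p.2 + 1)
      = ∑' p : ℕ × ℕ, f p.1 * g (p.1 + p.2 + 1) := by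
        rw [tsum_swap (F := fun p : ℕ × ℕ ↦ f p.2 * g (p.1 + p.2 + 1))]
        exact tsum_congr fun p ↦ by simp only; rw [Nat.add_comm p.2 p.1]
    _ = ∑' n : ℕ, (∑ i ∈ range n, f i) * g n := tsum_diag_succ hsw

/-! ### Splitting a product grid into the two triangles -/

def lowEquiv : ℕ × ℕ ≃ {q : ℕ × ℕ | q.1 ≤ q.2} where
  toFun p := ⟨(p.1, p.1 + p.2), by simp⟩
  invFun q := (q.1.1, q.1.2 - q.1.1)
  left_inv p := by
    obtain ⟨a, b⟩ := p
    simp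
  right_inv q := by
    obtain ⟨⟨a, b⟩, h⟩ := q
    simp only [Set.mem_setOf_eq] at h
    apply Subtype.ext
    simp only
    exact Prod.ext rfl (by omega)

def highEquiv : ℕ × ℕ ≃ ↥({q : ℕ × ℕ | q.1 ≤ q.2}ᶜ) where
  toFun p := ⟨(p.1 + p.2 + 1, p.1), by simp⟩
  invFun q := (q.1.2, q.1.1 - q.1.2 - 1)
  left_inv p := by
    obtain ⟨a, b⟩ := p
    simp only
    exact Prod.ext rfl (by omega)
  right_inv q := by
    obtain ⟨⟨a, b⟩, h⟩ := q
    simp only [Set.mem_compl_iff, Set.mem_setOf_eq, not_le] at h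
    apply Subtype.ext
    simp only
    exact Prod.ext (by omega) rfl

lemma tsum_split {F : ℕ × ℕ → ℝ} (h : Summable F) :
    ∑' p : ℕ × ℕ, F p
      = (∑' p : ℕ × ℕ, F (p.1, p.1 + p.2)) + ∑' p : ℕ × ℕ, F (p.1 + p.2 + 1, p.1) := by
  rw [← h.tsum_subtype_add_tsum_subtype_compl {q : ℕ × ℕ | q.1 ≤ q.2}]
  congr 1
  · exact (lowEquiv.tsum_eq (fun x : {q : ℕ × ℕ | q.1 ≤ q.2} ↦ F x)).symm
  · exact (highEquiv.tsum_eq (fun x : ↥({q : ℕ × ℕ | q.1 ≤ q.2}ᶜ) ↦ F x)).symm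

lemma tsum_grid {f g : ℕ → ℝ} (h : Summable fun p : ℕ × ℕ ↦ f p.1 * g p.2) :
    ∑' p : ℕ × ℕ, f p.1 * g p.2 = (∑' n, f n) * ∑' n, g n := by
  rw [Summable.tsum_prod' h (fun b ↦ by
    have hb : (fun c : ℕ ↦ f (b, c).1 * g (b, c).2) = (fun c : ℕ ↦ f b * g c) := rfl
    rw [hb]
    exact (h.prod_factor b).congr fun c ↦ rfl)]
  have hb : ∀ b : ℕ, ∑' c : ℕ, f (b, c).1 * g (b, c).2 = f b * ∑' c : ℕ, g c := by
    intro b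
    rw [show (fun c : ℕ ↦ f (b, c).1 * g (b, c).2) = (fun c : ℕ ↦ f b * g c) from rfl]
    exact tsum_mul_left
  rw [tsum_congr hb, tsum_mul_right]

/-! ### The partial-fraction identity -/

lemma pf5 {x y : ℝ} (hx : 0 < x) (hy : 0 < y) :
    (x ^ 2)⁻¹ * (y ^ 3)⁻¹
      = (y ^ 3)⁻¹ * ((x + y) ^ 2)⁻¹ + (2 * ((y ^ 2)⁻¹ * ((x + y) ^ 3)⁻¹)
        + ((x ^ 2)⁻¹ * ((x + y) ^ 3)⁻¹ + (3 * ((y ^ 1)⁻¹ * ((x + y) ^ 4)⁻¹)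
        + 3 * ((x ^ 1)⁻¹ * ((x + y) ^ 4)⁻¹)))) := by
  have hxy : (0:ℝ) < x + y := by linarith
  field_simp
  ring

lemma cast_s (k n : ℕ) : ((k + n + 1 : ℕ) : ℝ) + 1/2 = ((k : ℝ) + 1/2) + ((n : ℝ) + 1) := by
  push_cast; ring

lemma cast_s' (k n : ℕ) : ((k + n + 1 : ℕ) : ℝ) + 1/2 = ((k : ℝ) + 1) + ((n : ℝ) + 1/2) := by
  push_cast; ring

lemma pfC (p : ℕ × ℕ) :
    ou 2 p.1 * iv 3 p.2
      = iv 3 p.2 * ou 2 (p.1 + p.2 + 1) + (2 * (iv 2 p.2 * ou 3 (p.1 + p.2 + 1))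
        + (ou 2 p.1 * ou 3 (p.1 + p.2 + 1) + (3 * (iv 1 p.2 * ou 4 (p.1 + p.2 + 1))
        + 3 * (ou 1 p.1 * ou 4 (p.1 + p.2 + 1))))) := by
  obtain ⟨k, n⟩ := p
  unfold ou iv
  simp only
  rw [cast_s]
  exact pf5 (by positivity) (by positivity)

lemma pfD (p : ℕ × ℕ) :
    iv 2 p.1 * ou 3 p.2
      = ou 3 p.2 * ou 2 (p.1 + p.2 + 1) + (2 * (ou 2 p.2 * ou 3 (p.1 + p.2 + 1))
        + (iv 2 p.1 * ou 3 (p.1 + p.2 + 1) + (3 * (ou 1 p.2 * ou 4 (p.1 + p.2 + 1))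
        + 3 * (iv 1 p.1 * ou 4 (p.1 + p.2 + 1))))) := by
  obtain ⟨k, n⟩ := p
  unfold ou iv
  simp only
  rw [cast_s']
  exact pf5 (by positivity) (by positivity)

/-! ### Recognizing the named sums -/

lemma ttv_eq_s9 (s : ℕ) : ttv s = ∑' n : ℕ, ou s n := tsum_congr fun _ ↦ rfl
lemma zv_eq (s : ℕ) : zv s = ∑' n : ℕ, iv s n := tsum_congr fun _ ↦ rfl

lemma Tsum_eq (p q : ℕ) : Tsum p q = ∑' n : ℕ, (∑ i ∈ range n, ou p i) * ou q n :=
  tsum_congr fun n ↦ div_eq_mul_inv _ _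

lemma Ssum_eq (p q : ℕ) : Ssum p q = ∑' n : ℕ, (∑ i ∈ range (n + 1), ou p i) * iv q n :=
  tsum_congr fun n ↦ div_eq_mul_inv _ _

lemma Rsum_eq (p q : ℕ) : Rsum p q = ∑' n : ℕ, (∑ i ∈ range n, iv p i) * ou q n :=
  tsum_congr fun n ↦ div_eq_mul_inv _ _

/-! ### Summability of all the pieces -/

lemma summable_gridC : Summable fun p : ℕ × ℕ ↦ ou 2 p.1 * iv 3 p.2 :=
  Summable.mul_of_nonneg (summable_ou (by norm_num)) (summable_iv (by norm_num))
    (fun n ↦ ou_nonneg 2 n) (fun n ↦ iv_nonneg 3 n)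

lemma summable_gridB : Summable fun p : ℕ × ℕ ↦ ou 3 p.1 * iv 2 p.2 :=
  Summable.mul_of_nonneg (summable_ou (by norm_num)) (summable_iv (by norm_num))
    (fun n ↦ ou_nonneg 3 n) (fun n ↦ iv_nonneg 2 n)

lemma summable_gridD : Summable fun p : ℕ × ℕ ↦ iv 2 p.1 * ou 3 p.2 :=
  Summable.mul_of_nonneg (summable_iv (by norm_num)) (summable_ou (by norm_num))
    (fun n ↦ iv_nonneg 2 n) (fun n ↦ ou_nonneg 3 n)

lemma summable_gridOO23 : Summable fun p : ℕ × ℕ ↦ ou 2 p.1 * ou 3 p.2 :=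
  Summable.mul_of_nonneg (summable_ou (by norm_num)) (summable_ou (by norm_num))
    (fun n ↦ ou_nonneg 2 n) (fun n ↦ ou_nonneg 3 n)

lemma summable_gridOO32 : Summable fun p : ℕ × ℕ ↦ ou 3 p.1 * ou 2 p.2 :=
  Summable.mul_of_nonneg (summable_ou (by norm_num)) (summable_ou (by norm_num))
    (fun n ↦ ou_nonneg 3 n) (fun n ↦ ou_nonneg 2 n)

lemma summable_gIV : Summable fun n : ℕ ↦ iv 1 n * ou 2 n := by
  refine Summable.of_nonneg_of_le (fun n ↦ mul_nonneg (iv_nonneg 1 n) (ou_nonneg 2 n))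
    (fun n ↦ ?_) (summable_ou (s := 2) (by norm_num))
  exact mul_le_of_le_one_left (ou_nonneg 2 n) (iv_one_le n)

lemma summable_gOU : Summable fun n : ℕ ↦ ou 1 n * ou 2 n := by
  refine Summable.of_nonneg_of_le (fun n ↦ mul_nonneg (ou_nonneg 1 n) (ou_nonneg 2 n))
    (fun n ↦ ?_) ((summable_ou (s := 2) (by norm_num)).mul_left 2)
  exact mul_le_mul_of_nonneg_right (ou_one_le n) (ou_nonneg 2 n)

lemma summable_gridIVOU : Summable fun p : ℕ × ℕ ↦ ou 2 p.1 * (iv 1 p.2 * ou 2 p.2) :=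
  Summable.mul_of_nonneg (summable_ou (by norm_num)) summable_gIV
    (fun n ↦ ou_nonneg 2 n) (fun n ↦ mul_nonneg (iv_nonneg 1 n) (ou_nonneg 2 n))

lemma summable_gridOUOU : Summable fun p : ℕ × ℕ ↦ ou 2 p.1 * (ou 1 p.2 * ou 2 p.2) :=
  Summable.mul_of_nonneg (summable_ou (by norm_num)) summable_gOU
    (fun n ↦ ou_nonneg 2 n) (fun n ↦ mul_nonneg (ou_nonneg 1 n) (ou_nonneg 2 n))

lemma summable_gridIVOU' : Summable fun p : ℕ × ℕ ↦ (iv 1 p.1 * ou 2 p.1) * ou 2 p.2 :=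
  Summable.mul_of_nonneg summable_gIV (summable_ou (by norm_num))
    (fun n ↦ mul_nonneg (iv_nonneg 1 n) (ou_nonneg 2 n)) (fun n ↦ ou_nonneg 2 n)

lemma summable_gridOUOU' : Summable fun p : ℕ × ℕ ↦ (ou 1 p.1 * ou 2 p.1) * ou 2 p.2 :=
  Summable.mul_of_nonneg summable_gOU (summable_ou (by norm_num))
    (fun n ↦ mul_nonneg (ou_nonneg 1 n) (ou_nonneg 2 n)) (fun n ↦ ou_nonneg 2 n)

-- pieces of equation C
lemma summable_C1 : Summable fun p : ℕ × ℕ ↦ iv 3 p.2 * ou 2 (p.1 + p.2 + 1) := by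
  refine Summable.of_nonneg_of_le
    (fun p ↦ mul_nonneg (iv_nonneg _ _) (ou_nonneg _ _)) (fun p ↦ ?_) summable_gridC
  calc iv 3 p.2 * ou 2 (p.1 + p.2 + 1) ≤ iv 3 p.2 * ou 2 p.1 := by
        exact mul_le_mul_of_nonneg_left (ou_anti 2 (by omega)) (iv_nonneg _ _)
    _ = ou 2 p.1 * iv 3 p.2 := mul_comm _ _

lemma summable_C2 : Summable fun p : ℕ × ℕ ↦ iv 2 p.2 * ou 3 (p.1 + p.2 + 1) := by
  refine Summable.of_nonneg_of_le
    (fun p ↦ mul_nonneg (iv_nonneg _ _) (ou_nonneg _ _)) (fun p ↦ ?_) summable_gridB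
  calc iv 2 p.2 * ou 3 (p.1 + p.2 + 1) ≤ iv 2 p.2 * ou 3 p.1 := by
        exact mul_le_mul_of_nonneg_left (ou_anti 3 (by omega)) (iv_nonneg _ _)
    _ = ou 3 p.1 * iv 2 p.2 := mul_comm _ _

lemma summable_C3 : Summable fun p : ℕ × ℕ ↦ ou 2 p.1 * ou 3 (p.1 + p.2 + 1) := by
  refine Summable.of_nonneg_of_le
    (fun p ↦ mul_nonneg (ou_nonneg _ _) (ou_nonneg _ _)) (fun p ↦ ?_) summable_gridOO23
  exact mul_le_mul_of_nonneg_left (ou_anti 3 (by omega)) (ou_nonneg _ _)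

lemma summable_C4 : Summable fun p : ℕ × ℕ ↦ iv 1 p.2 * ou 4 (p.1 + p.2 + 1) := by
  refine Summable.of_nonneg_of_le
    (fun p ↦ mul_nonneg (iv_nonneg _ _) (ou_nonneg _ _)) (fun p ↦ ?_) summable_gridIVOU
  calc iv 1 p.2 * ou 4 (p.1 + p.2 + 1) ≤ iv 1 p.2 * (ou 2 p.1 * ou 2 p.2) := by
        exact mul_le_mul_of_nonneg_left (ou4_bound p.1 p.2) (iv_nonneg _ _)
    _ = ou 2 p.1 * (iv 1 p.2 * ou 2 p.2) := by ring

lemma summable_C5 : Summable fun p : ℕ × ℕ ↦ ou 1 p.1 * ou 4 (p.1 + p.2 + 1) := by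
  refine Summable.of_nonneg_of_le
    (fun p ↦ mul_nonneg (ou_nonneg _ _) (ou_nonneg _ _)) (fun p ↦ ?_) summable_gridOUOU'
  calc ou 1 p.1 * ou 4 (p.1 + p.2 + 1) ≤ ou 1 p.1 * (ou 2 p.1 * ou 2 p.2) := by
        exact mul_le_mul_of_nonneg_left (ou4_bound p.1 p.2) (ou_nonneg _ _)
    _ = (ou 1 p.1 * ou 2 p.1) * ou 2 p.2 := by ring

-- pieces of equation D
lemma summable_D1 : Summable fun p : ℕ × ℕ ↦ ou 3 p.2 * ou 2 (p.1 + p.2 + 1) := by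
  refine Summable.of_nonneg_of_le
    (fun p ↦ mul_nonneg (ou_nonneg _ _) (ou_nonneg _ _)) (fun p ↦ ?_) summable_gridOO23
  calc ou 3 p.2 * ou 2 (p.1 + p.2 + 1) ≤ ou 3 p.2 * ou 2 p.1 := by
        exact mul_le_mul_of_nonneg_left (ou_anti 2 (by omega)) (ou_nonneg _ _)
    _ = ou 2 p.1 * ou 3 p.2 := mul_comm _ _

lemma summable_D2 : Summable fun p : ℕ × ℕ ↦ ou 2 p.2 * ou 3 (p.1 + p.2 + 1) := by
  refine Summable.of_nonneg_of_le
    (fun p ↦ mul_nonneg (ou_nonneg _ _) (ou_nonneg _ _)) (fun p ↦ ?_) summable_gridOO32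
  calc ou 2 p.2 * ou 3 (p.1 + p.2 + 1) ≤ ou 2 p.2 * ou 3 p.1 := by
        exact mul_le_mul_of_nonneg_left (ou_anti 3 (by omega)) (ou_nonneg _ _)
    _ = ou 3 p.1 * ou 2 p.2 := mul_comm _ _

lemma summable_D3 : Summable fun p : ℕ × ℕ ↦ iv 2 p.1 * ou 3 (p.1 + p.2 + 1) := by
  refine Summable.of_nonneg_of_le
    (fun p ↦ mul_nonneg (iv_nonneg _ _) (ou_nonneg _ _)) (fun p ↦ ?_) summable_gridD
  exact mul_le_mul_of_nonneg_left (ou_anti 3 (by omega)) (iv_nonneg _ _)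

lemma summable_D4 : Summable fun p : ℕ × ℕ ↦ ou 1 p.2 * ou 4 (p.1 + p.2 + 1) := by
  refine Summable.of_nonneg_of_le
    (fun p ↦ mul_nonneg (ou_nonneg _ _) (ou_nonneg _ _)) (fun p ↦ ?_) summable_gridOUOU
  calc ou 1 p.2 * ou 4 (p.1 + p.2 + 1) ≤ ou 1 p.2 * (ou 2 p.1 * ou 2 p.2) := by
        exact mul_le_mul_of_nonneg_left (ou4_bound p.1 p.2) (ou_nonneg _ _)
    _ = ou 2 p.1 * (ou 1 p.2 * ou 2 p.2) := by ring

lemma summable_D5 : Summable fun p : ℕ × ℕ ↦ iv 1 p.1 * ou 4 (p.1 + p.2 + 1) := by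
  refine Summable.of_nonneg_of_le
    (fun p ↦ mul_nonneg (iv_nonneg _ _) (ou_nonneg _ _)) (fun p ↦ ?_) summable_gridIVOU'
  calc iv 1 p.1 * ou 4 (p.1 + p.2 + 1) ≤ iv 1 p.1 * (ou 2 p.1 * ou 2 p.2) := by
        exact mul_le_mul_of_nonneg_left (ou4_bound p.1 p.2) (iv_nonneg _ _)
    _ = (iv 1 p.1 * ou 2 p.1) * ou 2 p.2 := by ring

-- low/high pieces for the triangle splits
lemma summable_lowC : Summable fun p : ℕ × ℕ ↦ ou 2 p.1 * iv 3 (p.1 + p.2) := by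
  refine Summable.of_nonneg_of_le
    (fun p ↦ mul_nonneg (ou_nonneg _ _) (iv_nonneg _ _)) (fun p ↦ ?_) summable_gridC
  exact mul_le_mul_of_nonneg_left (iv_anti 3 (by omega)) (ou_nonneg _ _)

lemma summable_highC : Summable fun p : ℕ × ℕ ↦ iv 3 p.1 * ou 2 (p.1 + p.2 + 1) := by
  refine Summable.of_nonneg_of_le
    (fun p ↦ mul_nonneg (iv_nonneg _ _) (ou_nonneg _ _)) (fun p ↦ ?_)
    (Summable.mul_of_nonneg (summable_iv (s := 3) (by norm_num))
      (summable_ou (s := 2) (by norm_num)) (fun n ↦ iv_nonneg 3 n) (fun n ↦ ou_nonneg 2 n))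
  exact mul_le_mul_of_nonneg_left (ou_anti 2 (by omega)) (iv_nonneg _ _)

lemma summable_lowB : Summable fun p : ℕ × ℕ ↦ ou 3 p.1 * iv 2 (p.1 + p.2) := by
  refine Summable.of_nonneg_of_le
    (fun p ↦ mul_nonneg (ou_nonneg _ _) (iv_nonneg _ _)) (fun p ↦ ?_) summable_gridB
  exact mul_le_mul_of_nonneg_left (iv_anti 2 (by omega)) (ou_nonneg _ _)

lemma summable_highB : Summable fun p : ℕ × ℕ ↦ iv 2 p.1 * ou 3 (p.1 + p.2 + 1) :=
  summable_D3

/-! ### The four main equations -/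

lemma eqA : ttv 2 * zv 3 = Ssum 2 3 + Rsum 3 2 := by
  have h := tsum_split (F := fun p : ℕ × ℕ ↦ ou 2 p.1 * iv 3 p.2) summable_gridC
  have hgrid : ∑' p : ℕ × ℕ, ou 2 p.1 * iv 3 p.2 = ttv 2 * zv 3 := by
    rw [tsum_grid summable_gridC, ttv_eq_s9, zv_eq]
  have hlow : (∑' p : ℕ × ℕ, ou 2 p.1 * iv 3 (p.1 + p.2)) = Ssum 2 3 := by
    rw [tsum_diag summable_lowC, Ssum_eq]
  have hhigh : (∑' p : ℕ × ℕ, ou 2 (p.1 + p.2 + 1) * iv 3 p.1) = Rsum 3 2 := by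
    have hc : (∑' p : ℕ × ℕ, ou 2 (p.1 + p.2 + 1) * iv 3 p.1)
        = ∑' p : ℕ × ℕ, iv 3 p.1 * ou 2 (p.1 + p.2 + 1) :=
      tsum_congr fun p ↦ mul_comm _ _
    rw [hc, tsum_diag_succ summable_highC, Rsum_eq]
  calc ttv 2 * zv 3 = ∑' p : ℕ × ℕ, ou 2 p.1 * iv 3 p.2 := hgrid.symm
    _ = (∑' p : ℕ × ℕ, ou 2 p.1 * iv 3 (p.1 + p.2))
        + ∑' p : ℕ × ℕ, ou 2 (p.1 + p.2 + 1) * iv 3 p.1 := h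
    _ = Ssum 2 3 + Rsum 3 2 := by rw [hlow, hhigh]

lemma eqB : ttv 3 * zv 2 = Ssum 3 2 + Rsum 2 3 := by
  have h := tsum_split (F := fun p : ℕ × ℕ ↦ ou 3 p.1 * iv 2 p.2) summable_gridB
  have hgrid : ∑' p : ℕ × ℕ, ou 3 p.1 * iv 2 p.2 = ttv 3 * zv 2 := by
    rw [tsum_grid summable_gridB, ttv_eq_s9, zv_eq]
  have hlow : (∑' p : ℕ × ℕ, ou 3 p.1 * iv 2 (p.1 + p.2)) = Ssum 3 2 := by
    rw [tsum_diag summable_lowB, Ssum_eq]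
  have hhigh : (∑' p : ℕ × ℕ, ou 3 (p.1 + p.2 + 1) * iv 2 p.1) = Rsum 2 3 := by
    have hc : (∑' p : ℕ × ℕ, ou 3 (p.1 + p.2 + 1) * iv 2 p.1)
        = ∑' p : ℕ × ℕ, iv 2 p.1 * ou 3 (p.1 + p.2 + 1) :=
      tsum_congr fun p ↦ mul_comm _ _
    rw [hc, tsum_diag_succ summable_highB, Rsum_eq]
  calc ttv 3 * zv 2 = ∑' p : ℕ × ℕ, ou 3 p.1 * iv 2 p.2 := hgrid.symm
    _ = (∑' p : ℕ × ℕ, ou 3 p.1 * iv 2 (p.1 + p.2))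
        + ∑' p : ℕ × ℕ, ou 3 (p.1 + p.2 + 1) * iv 2 p.1 := h
    _ = Ssum 3 2 + Rsum 2 3 := by rw [hlow, hhigh]

lemma eqC : ttv 2 * zv 3
    = Rsum 3 2 + (2 * Rsum 2 3 + (Tsum 2 3 + (3 * Rsum 1 4 + 3 * Tsum 1 4))) := by
  have hgrid : ∑' p : ℕ × ℕ, ou 2 p.1 * iv 3 p.2 = ttv 2 * zv 3 := by
    rw [tsum_grid summable_gridC, ttv_eq_s9, zv_eq]
  rw [← hgrid, tsum_congr pfC]
  rw [Summable.tsum_add summable_C1 (((summable_C2.mul_left 2)).add (summable_C3.add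
    ((summable_C4.mul_left 3).add (summable_C5.mul_left 3))))]
  rw [Summable.tsum_add (summable_C2.mul_left 2) (summable_C3.add
    ((summable_C4.mul_left 3).add (summable_C5.mul_left 3)))]
  rw [Summable.tsum_add summable_C3 ((summable_C4.mul_left 3).add (summable_C5.mul_left 3))]
  rw [Summable.tsum_add (summable_C4.mul_left 3) (summable_C5.mul_left 3)]
  rw [tsum_mul_left, tsum_mul_left, tsum_mul_left]
  rw [tsum_diag_succ_snd summable_C1, tsum_diag_succ_snd summable_C2,
    tsum_diag_succ summable_C3, tsum_diag_succ_snd summable_C4,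
    tsum_diag_succ summable_C5]
  rw [← Rsum_eq 3 2, ← Rsum_eq 2 3, ← Tsum_eq 2 3, ← Rsum_eq 1 4, ← Tsum_eq 1 4]

lemma eqD : ttv 3 * zv 2
    = Tsum 3 2 + (2 * Tsum 2 3 + (Rsum 2 3 + (3 * Tsum 1 4 + 3 * Rsum 1 4))) := by
  have hgrid : ∑' p : ℕ × ℕ, iv 2 p.1 * ou 3 p.2 = zv 2 * ttv 3 := by
    rw [tsum_grid summable_gridD, ttv_eq_s9, zv_eq]
  have hgrid' : ∑' p : ℕ × ℕ, iv 2 p.1 * ou 3 p.2 = ttv 3 * zv 2 := by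
    rw [hgrid]; ring
  rw [← hgrid', tsum_congr pfD]
  rw [Summable.tsum_add summable_D1 (((summable_D2.mul_left 2)).add (summable_D3.add
    ((summable_D4.mul_left 3).add (summable_D5.mul_left 3))))]
  rw [Summable.tsum_add (summable_D2.mul_left 2) (summable_D3.add
    ((summable_D4.mul_left 3).add (summable_D5.mul_left 3)))]
  rw [Summable.tsum_add summable_D3 ((summable_D4.mul_left 3).add (summable_D5.mul_left 3))]
  rw [Summable.tsum_add (summable_D4.mul_left 3) (summable_D5.mul_left 3)]
  rw [tsum_mul_left, tsum_mul_left, tsum_mul_left]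
  rw [tsum_diag_succ_snd summable_D1, tsum_diag_succ_snd summable_D2,
    tsum_diag_succ summable_D3, tsum_diag_succ_snd summable_D4,
    tsum_diag_succ summable_D5]
  rw [← Tsum_eq 3 2, ← Tsum_eq 2 3, ← Rsum_eq 2 3, ← Tsum_eq 1 4, ← Rsum_eq 1 4]

/-! ### Depth-one evaluations -/

lemma zv_two : zv 2 = Real.pi ^ 2 / 6 := by
  have h := hasSum_zeta_two
  have h1 : Summable (fun n : ℕ ↦ (1:ℝ) / ((n + 1 : ℕ) : ℝ) ^ 2) :=
    (summable_nat_add_iff 1).mpr h.summable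
  have h2 : ∑' n : ℕ, (1:ℝ) / (n : ℝ) ^ 2
      = (1:ℝ) / ((0 : ℕ) : ℝ) ^ 2 + ∑' n : ℕ, (1:ℝ) / ((n + 1 : ℕ) : ℝ) ^ 2 :=
    tsum_eq_zero_add' h1
  rw [h.tsum_eq] at h2
  have h3 : zv 2 = ∑' n : ℕ, (1:ℝ) / ((n + 1 : ℕ) : ℝ) ^ 2 := by
    unfold zv
    refine tsum_congr fun n ↦ ?_
    rw [one_div]
    push_cast
    ring_nf
  rw [h3]
  have h0 : (1:ℝ) / ((0 : ℕ) : ℝ) ^ 2 = 0 := by norm_num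
  linarith

lemma ttv_three : ttv 3 = 7 * zv 3 := by
  have hiv := summable_iv (s := 3) (by norm_num)
  have hou := summable_ou (s := 3) (by norm_num)
  have hev : ∀ k : ℕ, iv 3 (2 * k) = 8⁻¹ * ou 3 k := by
    intro k
    unfold iv ou
    rw [show ((2 * k : ℕ) : ℝ) + 1 = 2 * ((k : ℝ) + 1/2) by push_cast; ring, mul_pow, mul_inv]
    norm_num
  have hod : ∀ k : ℕ, iv 3 (2 * k + 1) = 8⁻¹ * iv 3 k := by
    intro k
    unfold iv
    rw [show ((2 * k + 1 : ℕ) : ℝ) + 1 = 2 * ((k : ℝ) + 1) by push_cast; ring, mul_pow, mul_inv]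
    norm_num
  have he : Summable fun k : ℕ ↦ iv 3 (2 * k) :=
    ((hou.mul_left (8⁻¹ : ℝ)).congr fun k ↦ (hev k).symm)
  have ho : Summable fun k : ℕ ↦ iv 3 (2 * k + 1) :=
    ((hiv.mul_left (8⁻¹ : ℝ)).congr fun k ↦ (hod k).symm)
  have key := tsum_even_add_odd he ho
  rw [tsum_congr hev, tsum_congr hod, tsum_mul_left, tsum_mul_left] at key
  rw [← ttv_eq_s9, ← zv_eq] at key
  linarith

/-! ### Main theorem -/

theorem stmt9 : Tsum 2 3 + Tsum 3 2 + Ssum 2 3 + Ssum 3 2 = 7 / 3 * Real.pi ^ 2 * zv 3 := by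
  have hA := eqA
  have hB := eqB
  have hC := eqC
  have hD := eqD
  have key : Tsum 2 3 + Tsum 3 2 + Ssum 2 3 + Ssum 3 2 = 2 * (ttv 3 * zv 2) := by
    linarith
  rw [key, ttv_three, zv_two]
  ring
end
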